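/- Every alternating bilinear form on G = (Z/p^k Z)^m can be brought by a change of basis to a block-diagonal form that is an orthogonal direct sum of 2×2 blocks [[0, p^{a_j}], [-p^{a_j}, 0]] with 0 ≤ a_j ≤ k (where p^k = 0 gives zero blocks), together with at most one zero 1×1 block when m is odd. -/

import Mathlib

lemma zmod_factor {p k : ℕ} (hp : p.Prime) (x : ZMod (p^k)) (hx : x ≠ 0) :
    ∃ a < k, ∃ u : ZMod (p^k), IsUnit u ∧ x = (p : ZMod (p^k))^a * u := by
  haveI : NeZero (p^k) := ⟨pow_ne_zero _ hp.pos.ne'⟩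
  set n := x.val with hn
  have hn0 : n ≠ 0 := by simpa [hn, ZMod.val_eq_zero] using hx
  have hnlt : n < p^k := ZMod.val_lt x
  set a := n.factorization p with ha
  have hd : p ^ a ∣ n := Nat.ordProj_dvd n p
  have hb : ¬ p ∣ n / p ^ a := Nat.not_dvd_ordCompl hp hn0
  have heq : p ^ a * (n / p ^ a) = n := Nat.ordProj_mul_ordCompl_eq_self n p
  have hak : a < k := by
    by_contra h
    have h1 := Nat.le_of_dvd (Nat.pos_of_ne_zero hn0) hd
    have h2 : p ^ k ≤ p ^ a := Nat.pow_le_pow_right hp.pos (by omega)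
    omega
  refine ⟨a, hak, ((n / p^a : ℕ) : ZMod (p^k)), ?_, ?_⟩
  · rw [ZMod.isUnit_iff_coprime]
    exact Nat.Coprime.pow_right k ((hp.coprime_iff_not_dvd.mpr hb).symm)
  · have hx' : x = ((n : ℕ) : ZMod (p^k)) := by
      rw [hn, ZMod.natCast_zmod_val]
    obtain ⟨b, hb'⟩ : ∃ b, n = p ^ a * b := ⟨n / p^a, heq.symm⟩
    rw [hx', hb']
    push_cast
    rw [Nat.mul_div_cancel_left _ (pow_pos hp.pos a)]

section Helpers

variable {R : Type*} [CommRing R] {n : ℕ}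

lemma single_eq_ite (j : Fin n) : (Pi.single j (1:R)) = fun i => if j = i then (1:R) else 0 := by
  funext i
  simp [Pi.single_apply, eq_comm]

lemma pi_eq_sum_single (x : Fin n → R) : x = ∑ i, x i • (Pi.single i 1 : Fin n → R) := by
  conv_lhs => rw [pi_eq_sum_univ x]
  refine Finset.sum_congr rfl fun i _ => ?_
  rw [single_eq_ite]

lemma sum_single_mul (j : Fin n) (c : Fin n → R) :
    (∑ i, (Pi.single j 1 : Fin n → R) i * c i) = c j := by
  simp [Pi.single_apply]

lemma alt_skew (B : (Fin n → R) →ₗ[R] (Fin n → R) →ₗ[R] R) (hB : ∀ a, B a a = 0)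
    (x y : Fin n → R) : B x y = - B y x := by
  have h := hB (x + y)
  simp only [map_add, LinearMap.add_apply, hB x, hB y] at h
  linear_combination h

/-- shift an index by 2 -/
def shf (l : Fin n) : Fin (n+2) := ⟨(l:ℕ)+2, by omega⟩

lemma shf_val (l : Fin n) : ((shf l : Fin (n+2)) : ℕ) = (l:ℕ) + 2 := rfl

lemma shf_inj : Function.Injective (shf (n := n)) := by
  intro a b h
  have : ((shf a : Fin (n+2)) : ℕ) = ((shf b : Fin (n+2)) : ℕ) := by rw [h]
  simp [shf_val] at this
  exact Fin.ext this

/-- embedding (Fin n → R) → (Fin (n+2) → R) into coordinates ≥ 2 -/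
def emb : (Fin n → R) →ₗ[R] (Fin (n+2) → R) where
  toFun := fun x i => if h : 2 ≤ (i:ℕ) then x ⟨(i:ℕ)-2, by have := i.isLt; omega⟩ else 0
  map_add' := by intro x y; funext i; by_cases h : 2 ≤ (i:ℕ) <;> simp [h]
  map_smul' := by intro c x; funext i; by_cases h : 2 ≤ (i:ℕ) <;> simp [h]

/-- projection onto coordinates ≥ 2 -/
def prj : (Fin (n+2) → R) →ₗ[R] (Fin n → R) where
  toFun := fun v l => v (shf l)
  map_add' := by intro x y; funext l; simp
  map_smul' := by intro c x; funext l; simp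

lemma prj_emb (x : Fin n → R) : prj (emb x) = x := by
  funext l
  simp only [prj, emb, LinearMap.coe_mk, AddHom.coe_mk]
  rw [dif_pos (by simp [shf_val])]
  exact congrArg x (Fin.ext (by simp [shf_val]))

lemma emb_single (l : Fin n) : emb (Pi.single l (1:R)) = Pi.single (shf l) 1 := by
  funext i
  simp only [emb, LinearMap.coe_mk, AddHom.coe_mk]
  by_cases h : 2 ≤ (i:ℕ)
  · rw [dif_pos h]
    rw [Pi.single_apply, Pi.single_apply]
    have : (⟨(i:ℕ)-2, by have := i.isLt; omega⟩ : Fin n) = l ↔ i = shf l := by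
      constructor
      · intro hh
        apply Fin.ext
        rw [shf_val]
        have := congrArg Fin.val hh
        simp at this
        omega
      · intro hh
        apply Fin.ext
        have := congrArg Fin.val hh
        rw [shf_val] at this
        simp at this ⊢
        omega
    by_cases h2 : i = shf l
    · rw [if_pos (this.mpr h2), if_pos h2]
    · rw [if_neg (fun hh => h2 (this.mp hh)), if_neg h2]
  · rw [dif_neg h]
    rw [Pi.single_apply, if_neg]
    intro hh
    apply h
    rw [hh, shf_val]
    omega

lemma prj_single_lt (j : Fin (n+2)) (hj : (j:ℕ) < 2) : prj (Pi.single j (1:R)) = 0 := by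
  funext l
  simp only [prj, LinearMap.coe_mk, AddHom.coe_mk, Pi.zero_apply]
  rw [Pi.single_apply, if_neg]
  intro h
  rw [← h, shf_val] at hj
  omega

lemma prj_single_shf (l : Fin n) : prj (Pi.single (shf l) (1:R)) = Pi.single l 1 := by
  rw [← emb_single, prj_emb]

end Helpers

section H2
variable {R : Type*} [CommRing R] {n : ℕ}

/-- shear linear map: v ↦ (∑ v j * c j) • e₀ + (∑ v j * d j) • e₁ -/
def shearT (c d : Fin (n+2) → R) : (Fin (n+2) → R) →ₗ[R] (Fin (n+2) → R) where
  toFun := fun v => (∑ j, v j * c j) • (Pi.single 0 1 : Fin (n+2) → R)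
      + (∑ j, v j * d j) • (Pi.single 1 1 : Fin (n+2) → R)
  map_add' := by
    intro x y
    simp only [Pi.add_apply, add_mul, Finset.sum_add_distrib, add_smul]
    abel
  map_smul' := by
    intro a x
    simp only [Pi.smul_apply, smul_eq_mul, mul_assoc, RingHom.id_apply, ← Finset.mul_sum]
    rw [smul_add, smul_smul, smul_smul]

lemma shearT_single (c d : Fin (n+2) → R) (j : Fin (n+2)) :
    shearT c d (Pi.single j 1) = c j • (Pi.single 0 1 : Fin (n+2) → R)
      + d j • (Pi.single 1 1 : Fin (n+2) → R) := by
  simp only [shearT, LinearMap.coe_mk, AddHom.coe_mk]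
  simp [Pi.single_apply]

lemma shearT_sq (c d : Fin (n+2) → R) (hc0 : c 0 = 0) (hc1 : c 1 = 0)
    (hd0 : d 0 = 0) (hd1 : d 1 = 0) (v : Fin (n+2) → R) :
    shearT c d (shearT c d v) = 0 := by
  set A := (∑ j, v j * c j)
  set B := (∑ j, v j * d j)
  have : shearT c d v = A • (Pi.single 0 1 : Fin (n+2) → R) + B • (Pi.single 1 1 : Fin (n+2) → R) := rfl
  rw [this, map_add, map_smul, map_smul, shearT_single, shearT_single, hc0, hc1, hd0, hd1]
  simp

/-- shear equivalence id + T -/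
def shearE (c d : Fin (n+2) → R) (hc0 : c 0 = 0) (hc1 : c 1 = 0)
    (hd0 : d 0 = 0) (hd1 : d 1 = 0) : (Fin (n+2) → R) ≃ₗ[R] (Fin (n+2) → R) :=
  LinearEquiv.ofLinear (LinearMap.id + shearT c d) (LinearMap.id - shearT c d)
    (by
      apply LinearMap.ext; intro v
      simp only [LinearMap.comp_apply, LinearMap.add_apply, LinearMap.sub_apply,
        LinearMap.id_apply, map_sub]
      rw [shearT_sq c d hc0 hc1 hd0 hd1]
      abel)
    (by
      apply LinearMap.ext; intro v
      simp only [LinearMap.comp_apply, LinearMap.add_apply, LinearMap.sub_apply,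
        LinearMap.id_apply, map_add]
      rw [shearT_sq c d hc0 hc1 hd0 hd1]
      abel)

lemma shearE_apply (c d : Fin (n+2) → R) (hc0 : c 0 = 0) (hc1 : c 1 = 0)
    (hd0 : d 0 = 0) (hd1 : d 1 = 0) (v : Fin (n+2) → R) :
    shearE c d hc0 hc1 hd0 hd1 v = v + shearT c d v := rfl

/-- diagonal scaling equivalence -/
def diagE (c : Fin n → Rˣ) : (Fin n → R) ≃ₗ[R] (Fin n → R) :=
  LinearEquiv.ofLinear
    { toFun := fun v i => (c i : R) * v i
      map_add' := by intro x y; funext i; simp [mul_add]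
      map_smul' := by intro a x; funext i; simp; ring }
    { toFun := fun v i => ((c i)⁻¹ : Rˣ) * v i
      map_add' := by intro x y; funext i; simp [mul_add]
      map_smul' := by intro a x; funext i; simp; ring }
    (by ext v; simp [← mul_assoc])
    (by ext v; simp [← mul_assoc])

lemma diagE_single (c : Fin n → Rˣ) (j : Fin n) :
    diagE c (Pi.single j 1) = ((c j : R)) • (Pi.single j 1 : Fin n → R) := by
  funext i
  simp only [diagE, LinearEquiv.ofLinear_apply, LinearMap.coe_mk, AddHom.coe_mk,
    Pi.smul_apply, smul_eq_mul]
  by_cases h : i = j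
  · subst h; simp
  · simp [Pi.single_apply, h, fun hh => h hh]

/-- permutation equivalence: single i 1 ↦ single (σ i) 1 -/
def permE (σ : Equiv.Perm (Fin n)) : (Fin n → R) ≃ₗ[R] (Fin n → R) :=
  LinearEquiv.funCongrLeft R R σ.symm

lemma permE_single (σ : Equiv.Perm (Fin n)) (i : Fin n) :
    permE (R := R) σ (Pi.single i 1) = Pi.single (σ i) 1 := by
  funext x
  simp only [permE, LinearEquiv.funCongrLeft_apply, LinearMap.funLeft_apply]
  rw [Pi.single_apply, Pi.single_apply]
  by_cases h : x = σ i
  · rw [if_pos (by rw [h]; simp), if_pos h]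
  · rw [if_neg, if_neg h]
    intro hh
    exact h (by rw [← hh]; simp)

/-- extension equivalence: identity on coords 0,1, α' on the rest -/
def extE (α' : (Fin n → R) ≃ₗ[R] (Fin n → R)) : (Fin (n+2) → R) ≃ₗ[R] (Fin (n+2) → R) :=
  LinearEquiv.ofLinear
    { toFun := fun v i => if h : 2 ≤ (i:ℕ) then α' (prj v) ⟨(i:ℕ)-2, by have := i.isLt; omega⟩ else v i
      map_add' := by intro x y; funext i; by_cases h : 2 ≤ (i:ℕ) <;> simp [h]
      map_smul' := by intro a x; funext i; by_cases h : 2 ≤ (i:ℕ) <;> simp [h]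
    }
    { toFun := fun v i => if h : 2 ≤ (i:ℕ) then α'.symm (prj v) ⟨(i:ℕ)-2, by have := i.isLt; omega⟩ else v i
      map_add' := by intro x y; funext i; by_cases h : 2 ≤ (i:ℕ) <;> simp [h]
      map_smul' := by intro a x; funext i; by_cases h : 2 ≤ (i:ℕ) <;> simp [h]
    }
    (by
      apply LinearMap.ext; intro v
      funext i
      simp only [LinearMap.comp_apply, LinearMap.coe_mk, AddHom.coe_mk, LinearMap.id_apply]
      by_cases h : 2 ≤ (i:ℕ)
      · rw [dif_pos h]
        have hp : prj (R := R) (fun i => if h : 2 ≤ (i:ℕ) then α'.symm (prj v) ⟨(i:ℕ)-2, by have := i.isLt; omega⟩ else v i) = α'.symm (prj v) := by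
          funext l
          simp only [prj, LinearMap.coe_mk, AddHom.coe_mk]
          rw [dif_pos (by rw [shf_val]; omega)]
          exact congrArg _ (Fin.ext (by simp [shf_val]))
        rw [hp, LinearEquiv.apply_symm_apply]
        show prj v _ = v i
        simp only [prj, LinearMap.coe_mk, AddHom.coe_mk]
        exact congrArg v (Fin.ext (by simp [shf_val]; omega))
      · rw [dif_neg h, dif_neg h]
    )
    (by
      apply LinearMap.ext; intro v
      funext i
      simp only [LinearMap.comp_apply, LinearMap.coe_mk, AddHom.coe_mk, LinearMap.id_apply]
      by_cases h : 2 ≤ (i:ℕ)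
      · rw [dif_pos h]
        have hp : prj (R := R) (fun i => if h : 2 ≤ (i:ℕ) then α' (prj v) ⟨(i:ℕ)-2, by have := i.isLt; omega⟩ else v i) = α' (prj v) := by
          funext l
          simp only [prj, LinearMap.coe_mk, AddHom.coe_mk]
          rw [dif_pos (by rw [shf_val]; omega)]
          exact congrArg _ (Fin.ext (by simp [shf_val]))
        rw [hp, LinearEquiv.symm_apply_apply]
        show prj v _ = v i
        simp only [prj, LinearMap.coe_mk, AddHom.coe_mk]
        exact congrArg v (Fin.ext (by simp [shf_val]; omega))
      · rw [dif_neg h, dif_neg h]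
    )

lemma extE_single_lt (α' : (Fin n → R) ≃ₗ[R] (Fin n → R)) (j : Fin (n+2)) (hj : (j:ℕ) < 2) :
    extE α' (Pi.single j 1) = Pi.single j 1 := by
  funext i
  simp only [extE, LinearEquiv.ofLinear_apply, LinearMap.coe_mk, AddHom.coe_mk]
  by_cases h : 2 ≤ (i:ℕ)
  · rw [dif_pos h, prj_single_lt j hj]
    rw [map_zero]
    rw [Pi.single_apply, if_neg (by intro hh; rw [hh] at h; omega)]
    rfl
  · rw [dif_neg h]

lemma extE_single_shf (α' : (Fin n → R) ≃ₗ[R] (Fin n → R)) (l : Fin n) :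
    extE α' (Pi.single (shf l) 1) = emb (α' (Pi.single l 1)) := by
  funext i
  simp only [extE, emb, LinearEquiv.ofLinear_apply, LinearMap.coe_mk, AddHom.coe_mk]
  by_cases h : 2 ≤ (i:ℕ)
  · rw [dif_pos h, dif_pos h, prj_single_shf]
  · rw [dif_neg h, dif_neg h]
    rw [Pi.single_apply, if_neg (by intro hh; rw [hh, shf_val] at h; omega)]

end H2
theorem key (p k : ℕ) (hp : p.Prime) (hk : 1 ≤ k) :
    ∀ m (B : (Fin m → ZMod (p^k)) →ₗ[ZMod (p^k)] (Fin m → ZMod (p^k)) →ₗ[ZMod (p^k)] ZMod (p^k)),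
      (∀ a, B a a = 0) →
      ∃ (α : (Fin m → ZMod (p^k)) ≃ₗ[ZMod (p^k)] (Fin m → ZMod (p^k))) (a : ℕ → ℕ),
        (∀ j, a j ≤ k) ∧
        ∀ i j : Fin m, (i : ℕ) < (j : ℕ) →
          B (α (Pi.single i 1)) (α (Pi.single j 1)) =
            if (j : ℕ) = (i : ℕ) + 1 ∧ (i : ℕ) % 2 = 0
            then (p : ZMod (p^k)) ^ (a ((i : ℕ) / 2)) else 0 := by
  intro m
  induction m using Nat.strong_induction_on with
  | _ m IH =>
  intro B hB
  classical
  have hpk0 : (p : ZMod (p^k))^k = 0 := by rw [← Nat.cast_pow, ZMod.natCast_self]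
  by_cases h0 : ∀ s t : Fin m, B (Pi.single s 1) (Pi.single t 1) = 0
  · refine ⟨LinearEquiv.refl _ _, fun _ => k, fun _ => le_rfl, ?_⟩
    intro i j hij
    simp only [LinearEquiv.refl_apply, h0]
    split
    · rw [hpk0]
    · rfl
  · push_neg at h0
    obtain ⟨s0, t0, hst0⟩ := h0
    have hm2 : 2 ≤ m := by
      by_contra h
      haveI : Subsingleton (Fin m) := Fin.subsingleton_iff_le_one.mpr (by omega)
      exact hst0 (by rw [Subsingleton.elim s0 t0]; exact hB _)
    obtain ⟨n, rfl⟩ : ∃ n, m = n + 2 := ⟨m - 2, by omega⟩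
    -- minimal valuation
    have hPex : ∃ a, a < k ∧ ∃ s t : Fin (n+2),
        B (Pi.single s 1) (Pi.single t 1) ≠ 0 ∧
        ∃ u : ZMod (p^k), IsUnit u ∧
          B (Pi.single s 1) (Pi.single t 1) = (p : ZMod (p^k))^a * u := by
      obtain ⟨a, hak, u, hu, hxu⟩ := zmod_factor hp _ hst0
      exact ⟨a, hak, s0, t0, hst0, u, hu, hxu⟩
    obtain ⟨ha₀k, s, t, hst, u, hu, hvalu⟩ := Nat.find_spec hPex
    set a₀ := Nat.find hPex with ha₀
    have hdvd0 : ∀ s' t' : Fin (n+2),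
        (p : ZMod (p^k))^a₀ ∣ B (Pi.single s' 1) (Pi.single t' 1) := by
      intro s' t'
      by_cases hz : B (Pi.single s' 1) (Pi.single t' 1) = 0
      · rw [hz]; exact dvd_zero _
      · obtain ⟨b, hbk, u', hu', hxu'⟩ := zmod_factor hp _ hz
        have hab : a₀ ≤ b := Nat.find_min' hPex ⟨hbk, s', t', hz, u', hu', hxu'⟩
        rw [hxu']
        exact Dvd.dvd.mul_right (pow_dvd_pow _ hab) _
    have hdvd : ∀ x y, (p : ZMod (p^k))^a₀ ∣ B x y := by
      intro x y
      rw [pi_eq_sum_single x, pi_eq_sum_single y]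
      simp only [map_sum, map_smul, LinearMap.sum_apply, LinearMap.smul_apply, smul_eq_mul]
      refine Finset.dvd_sum fun t'' _ => ?_
      refine Dvd.dvd.mul_left ?_ _
      refine Finset.dvd_sum fun s'' _ => ?_
      exact Dvd.dvd.mul_left (hdvd0 _ _) _
    have hsnet : s ≠ t := fun h => hst (by rw [h]; exact hB _)
    -- permutation
    have h01 : (0 : Fin (n+2)) ≠ 1 := by
      intro h; exact absurd (congrArg Fin.val h) (by simp)
    set τ := Equiv.swap (0 : Fin (n+2)) s with hτ
    set t' := τ.symm t with ht'
    have ht'0 : t' ≠ 0 := by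
      intro h
      apply hsnet
      have h2 : τ t' = t := Equiv.apply_symm_apply τ t
      rw [h] at h2
      rw [hτ, Equiv.swap_apply_left] at h2
      exact h2
    set σ := (Equiv.swap (1 : Fin (n+2)) t').trans τ with hσ
    have hσ0 : σ 0 = s := by
      rw [hσ]
      simp only [Equiv.trans_apply]
      rw [Equiv.swap_apply_of_ne_of_ne h01 (Ne.symm ht'0), hτ, Equiv.swap_apply_left]
    have hσ1 : σ 1 = t := by
      rw [hσ]
      simp only [Equiv.trans_apply]
      rw [Equiv.swap_apply_left, ht', Equiv.apply_symm_apply]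
    -- scaling units
    set cu : Fin (n+2) → (ZMod (p^k))ˣ := fun i => if i = 1 then hu.unit⁻¹ else 1 with hcu
    set γ : (Fin (n+2) → ZMod (p^k)) ≃ₗ[ZMod (p^k)] (Fin (n+2) → ZMod (p^k)) :=
      (diagE cu).trans (permE σ) with hγ
    have hγE : ∀ i : Fin (n+2), γ (Pi.single i 1) = (cu i : ZMod (p^k)) • (Pi.single (σ i) 1 : Fin (n+2) → ZMod (p^k)) := by
      intro i
      rw [hγ]
      simp only [LinearEquiv.trans_apply]
      rw [diagE_single, map_smul, permE_single]
    set B1 := B.compl₁₂ (γ : (Fin (n+2) → ZMod (p^k)) →ₗ[ZMod (p^k)] _)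
        (γ : (Fin (n+2) → ZMod (p^k)) →ₗ[ZMod (p^k)] _) with hB1def
    have hB1ap : ∀ x y, B1 x y = B (γ x) (γ y) := by
      intro x y; rw [hB1def]; simp [LinearMap.compl₁₂_apply]
    have hB1 : ∀ x, B1 x x = 0 := fun x => by rw [hB1ap]; exact hB _
    have hB1dvd : ∀ x y, (p : ZMod (p^k))^a₀ ∣ B1 x y := fun x y => by
      rw [hB1ap]; exact hdvd _ _
    have hB101 : B1 (Pi.single 0 1) (Pi.single 1 1) = (p : ZMod (p^k))^a₀ := by
      rw [hB1ap, hγE, hγE, hσ0, hσ1]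
      have hcu0 : cu 0 = 1 := by rw [hcu]; simp [h01]
      have hcu1 : cu 1 = hu.unit⁻¹ := by rw [hcu]; simp
      rw [hcu0, hcu1]
      simp only [Units.val_one, one_smul, map_smul, LinearMap.smul_apply, smul_eq_mul]
      rw [hvalu]
      rw [mul_comm ((p:ZMod (p^k))^a₀) u, ← mul_assoc, IsUnit.val_inv_mul hu, one_mul]
    obtain ⟨g, hg⟩ : ∃ g : Fin (n+2) → ZMod (p^k), ∀ j,
        B1 (Pi.single 0 1) (Pi.single j 1) = (p : ZMod (p^k))^a₀ * g j := by
      choose g hg using fun j => hB1dvd (Pi.single 0 1) (Pi.single j 1)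
      exact ⟨g, hg⟩
    obtain ⟨h, hh⟩ : ∃ h : Fin (n+2) → ZMod (p^k), ∀ j,
        B1 (Pi.single 1 1) (Pi.single j 1) = (p : ZMod (p^k))^a₀ * h j := by
      choose h hh using fun j => hB1dvd (Pi.single 1 1) (Pi.single j 1)
      exact ⟨h, hh⟩
    set cc : Fin (n+2) → ZMod (p^k) := fun j => if 2 ≤ (j:ℕ) then h j else 0 with hccdef
    set dd : Fin (n+2) → ZMod (p^k) := fun j => if 2 ≤ (j:ℕ) then -(g j) else 0 with hdddef
    have hcc0 : cc 0 = 0 := by rw [hccdef]; simp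
    have hcc1 : cc 1 = 0 := by rw [hccdef]; simp
    have hdd0 : dd 0 = 0 := by rw [hdddef]; simp
    have hdd1 : dd 1 = 0 := by rw [hdddef]; simp
    set α₃ := shearE cc dd hcc0 hcc1 hdd0 hdd1 with hα₃
    have hα₃E : ∀ j : Fin (n+2), α₃ (Pi.single j 1) =
        Pi.single j 1 + cc j • (Pi.single 0 1 : Fin (n+2) → ZMod (p^k))
          + dd j • (Pi.single 1 1 : Fin (n+2) → ZMod (p^k)) := by
      intro j
      rw [hα₃, shearE_apply, shearT_single]
      abel
    set B2 := B1.compl₁₂ (α₃ : (Fin (n+2) → ZMod (p^k)) →ₗ[ZMod (p^k)] _)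
        (α₃ : (Fin (n+2) → ZMod (p^k)) →ₗ[ZMod (p^k)] _) with hB2def
    have hB2ap : ∀ x y, B2 x y = B1 (α₃ x) (α₃ y) := by
      intro x y; rw [hB2def]; simp [LinearMap.compl₁₂_apply]
    have hB2alt : ∀ x, B2 x x = 0 := fun x => by rw [hB2ap]; exact hB1 _
    have hα₃0 : α₃ (Pi.single (0 : Fin (n+2)) 1) = Pi.single 0 1 := by
      rw [hα₃E, hcc0, hdd0]; simp
    have hα₃1 : α₃ (Pi.single (1 : Fin (n+2)) 1) = Pi.single 1 1 := by
      rw [hα₃E, hcc1, hdd1]; simp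
    have hB201 : B2 (Pi.single 0 1) (Pi.single 1 1) = (p : ZMod (p^k))^a₀ := by
      rw [hB2ap, hα₃0, hα₃1, hB101]
    have hB20j : ∀ j : Fin (n+2), 2 ≤ (j:ℕ) → B2 (Pi.single 0 1) (Pi.single j 1) = 0 := by
      intro j hj
      rw [hB2ap, hα₃0, hα₃E]
      have hccj : cc j = h j := by rw [hccdef]; simp [hj]
      have hddj : dd j = -(g j) := by rw [hdddef]; simp [hj]
      rw [hccj, hddj]
      simp only [map_add, map_smul, smul_eq_mul]
      rw [hg j, hB101, hB1 (Pi.single 0 1)]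
      ring
    have hsk : ∀ x y, B1 x y = - B1 y x := alt_skew B1 hB1
    have hB21j : ∀ j : Fin (n+2), 2 ≤ (j:ℕ) → B2 (Pi.single 1 1) (Pi.single j 1) = 0 := by
      intro j hj
      rw [hB2ap, hα₃1, hα₃E]
      have hccj : cc j = h j := by rw [hccdef]; simp [hj]
      have hddj : dd j = -(g j) := by rw [hdddef]; simp [hj]
      rw [hccj, hddj]
      simp only [map_add, map_smul, smul_eq_mul]
      rw [hh j, hsk (Pi.single 1 1) (Pi.single 0 1), hB101, hB1 (Pi.single 1 1)]
      ring
    -- recursive form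
    set B' := B2.compl₁₂ (emb : (Fin n → ZMod (p^k)) →ₗ[ZMod (p^k)] _)
        (emb : (Fin n → ZMod (p^k)) →ₗ[ZMod (p^k)] _) with hB'def
    have hB'ap : ∀ x y, B' x y = B2 (emb x) (emb y) := by
      intro x y; rw [hB'def]; simp [LinearMap.compl₁₂_apply]
    have hB'alt : ∀ x, B' x x = 0 := fun x => by rw [hB'ap]; exact hB2alt _
    obtain ⟨α', a', ha'k, hpat⟩ := IH n (by omega) B' hB'alt
    set α₄ := extE α' with hα₄
    set α := (α₄.trans α₃).trans γ with hα
    set a : ℕ → ℕ := fun r => if r = 0 then a₀ else a' (r-1) with ha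
    refine ⟨α, a, ?_, ?_⟩
    · intro j
      rw [ha]
      by_cases hj : j = 0
      · simp [hj]; omega
      · simp [hj]; exact ha'k _
    intro i j hij
    have hval : B (α (Pi.single i 1)) (α (Pi.single j 1)) =
        B2 (α₄ (Pi.single i 1)) (α₄ (Pi.single j 1)) := by
      rw [hα, hB2ap, hB1ap]
      simp [LinearEquiv.trans_apply]
    rw [hval]
    have hB2emb : ∀ (i' : Fin (n+2)), ((i':ℕ) = 0 ∨ (i':ℕ) = 1) →
        ∀ z : Fin n → ZMod (p^k), B2 (Pi.single i' 1) (emb z) = 0 := by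
      intro i' hi' z
      rw [pi_eq_sum_single z]
      simp only [map_sum, map_smul]
      refine Finset.sum_eq_zero fun l _ => ?_
      rw [emb_single]
      rcases hi' with hi' | hi'
      · have : i' = (0 : Fin (n+2)) := Fin.ext (by simpa using hi')
        rw [this, hB20j (shf l) (by rw [shf_val]; omega)]
        simp
      · have : i' = (1 : Fin (n+2)) := Fin.ext (by simpa using hi')
        rw [this, hB21j (shf l) (by rw [shf_val]; omega)]
        simp
    by_cases hi2 : 2 ≤ (i:ℕ)
    · -- both ≥ 2
      have hj2 : 2 ≤ (j:ℕ) := by omega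
      obtain ⟨li, hlival⟩ : ∃ li : Fin n, (li:ℕ) = (i:ℕ)-2 :=
        ⟨⟨(i:ℕ)-2, by have := i.isLt; omega⟩, rfl⟩
      obtain ⟨lj, hljval⟩ : ∃ lj : Fin n, (lj:ℕ) = (j:ℕ)-2 :=
        ⟨⟨(j:ℕ)-2, by have := j.isLt; omega⟩, rfl⟩
      have hi : i = shf li := Fin.ext (by rw [shf_val, hlival]; omega)
      have hj : j = shf lj := Fin.ext (by rw [shf_val, hljval]; omega)
      have h1 : α₄ (Pi.single i (1 : ZMod (p^k))) = emb (α' (Pi.single li 1)) := by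
        rw [hi, hα₄, extE_single_shf]
      have h2 : α₄ (Pi.single j (1 : ZMod (p^k))) = emb (α' (Pi.single lj 1)) := by
        rw [hj, hα₄, extE_single_shf]
      rw [h1, h2, ← hB'ap]
      rw [hpat li lj (by rw [hlival, hljval]; omega)]
      by_cases hcond : (j:ℕ) = (i:ℕ) + 1 ∧ (i:ℕ) % 2 = 0
      · rw [if_pos (by rw [hlival, hljval]; omega), if_pos hcond]
        simp only [ha]
        rw [if_neg (show ¬ ((i:ℕ)/2 = 0) from by omega)]
        have hq : (li:ℕ)/2 = (i:ℕ)/2 - 1 := by omega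
        rw [hq]
      · rw [if_neg (by rw [hlival, hljval]; omega), if_neg hcond]
    · -- i < 2
      by_cases hj2 : 2 ≤ (j:ℕ)
      · obtain ⟨lj, hljval⟩ : ∃ lj : Fin n, (lj:ℕ) = (j:ℕ)-2 :=
          ⟨⟨(j:ℕ)-2, by have := j.isLt; omega⟩, rfl⟩
        have hj : j = shf lj := Fin.ext (by rw [shf_val, hljval]; omega)
        have h2 : α₄ (Pi.single j (1 : ZMod (p^k))) = emb (α' (Pi.single lj 1)) := by
          rw [hj, hα₄, extE_single_shf]
        have h1 : α₄ (Pi.single i (1 : ZMod (p^k))) = Pi.single i 1 := by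
          rw [hα₄, extE_single_lt _ _ (by omega)]
        rw [h1, h2, hB2emb i (by omega)]
        rw [if_neg (by omega)]
      · -- i = 0, j = 1
        have hi0 : (i:ℕ) = 0 := by omega
        have hj1 : (j:ℕ) = 1 := by omega
        have hieq : i = (0 : Fin (n+2)) := Fin.ext (by simpa using hi0)
        have hjeq : j = (1 : Fin (n+2)) := Fin.ext (by simpa using hj1)
        rw [hieq, hjeq]
        have h1 : α₄ (Pi.single (0 : Fin (n+2)) (1 : ZMod (p^k))) = Pi.single 0 1 := by
          rw [hα₄]; exact extE_single_lt _ _ (by simp)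
        have h2 : α₄ (Pi.single (1 : Fin (n+2)) (1 : ZMod (p^k))) = Pi.single 1 1 := by
          rw [hα₄]; exact extE_single_lt _ _ (by simp)
        rw [h1, h2, hB201]
        rw [if_pos (by omega)]
        rw [ha]
        simp [hi0]

/-- Normal form for alternating bilinear forms on `(ℤ/p^kℤ)^m`: after a change of basis
`α ∈ GL(m, ℤ/p^kℤ)`, the form is an orthogonal direct sum of 2×2 blocks
`[[0, p^{a_j}], [-p^{a_j}, 0]]` with `0 ≤ a_j ≤ k` (where `p^k = 0` gives zero blocks),
together with at most one zero 1×1 block when `m` is odd: the basis vectors are paired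
consecutively `(e_0,e_1), (e_2,e_3), …` and all other pairings vanish. -/
theorem stmt8 (p k m : ℕ) (hp : p.Prime) (hk : 1 ≤ k)
    (B : (Fin m → ZMod (p^k)) →ₗ[ZMod (p^k)] (Fin m → ZMod (p^k)) →ₗ[ZMod (p^k)] ZMod (p^k))
    (hB : ∀ a, B a a = 0) :
    ∃ (α : (Fin m → ZMod (p^k)) ≃ₗ[ZMod (p^k)] (Fin m → ZMod (p^k))) (a : ℕ → ℕ),
      (∀ j, a j ≤ k) ∧
      ∀ i j : Fin m, (i : ℕ) < (j : ℕ) →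
        B (α (Pi.single i 1)) (α (Pi.single j 1)) =
          if (j : ℕ) = (i : ℕ) + 1 ∧ (i : ℕ) % 2 = 0
          then (p : ZMod (p^k)) ^ (a ((i : ℕ) / 2)) else 0 := by
  exact key p k hp hk m B hB
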